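/- Let n ≥ 3, let a_1,…,a_n be integers with a_i ≥ 2 for all i, and let 1 < s < n with a_s = 2. Write p/q = [a_1,…,a_n], p_1/q_1 = [a_1,…,a_{s−1}], and p_2/q_2 = [a_{s+1},…,a_n], each as a fraction in lowest terms with p > q ≥ 1, p_1 > q_1 ≥ 1, p_2 > q_2 ≥ 1. Suppose p_1/(p_1−q_1) = [b_1,…,b_k] and p_2/(p_2−q_2) = [c_1,…,c_l] with all b_i ≥ 2 and all c_j ≥ 2. Then p/(p−q) = [b_1,…,b_{k−1}, b_k + c_1, c_2,…,c_l]. -/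

import Mathlib

/-- Hirzebruch–Jung continued fraction `[x₁,…,x_r] = x₁ − 1/(x₂ − 1/(⋯ − 1/x_r))`. -/
def hjCF : List ℤ → ℚ
  | [] => 0
  | a :: l => (a : ℚ) - 1 / hjCF l

namespace HJ

/-- continued fraction with a formal tail value -/
def hjT : List ℤ → ℚ → ℚ
  | [], t => t
  | a :: l, t => (a : ℚ) - 1 / hjT l t

/-- matrix product of `[[aᵢ, -1], [1, 0]]`, stored as (A, B, C, D) -/
def cont : List ℤ → ℤ × ℤ × ℤ × ℤ
  | [] => (1, 0, 0, 1)
  | a :: l =>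
    (a * (cont l).1 - (cont l).2.2.1, a * (cont l).2.1 - (cont l).2.2.2,
      (cont l).1, (cont l).2.1)

lemma hjCF_append (L M : List ℤ) : hjCF (L ++ M) = hjT L (hjCF M) := by
  induction L with
  | nil => rfl
  | cons a l ih => simp only [List.cons_append, hjCF, hjT, List.append_eq, ih]

lemma cont_det (L : List ℤ) :
    (cont L).1 * (cont L).2.2.2 - (cont L).2.1 * (cont L).2.2.1 = 1 := by
  induction L with
  | nil => simp [cont]
  | cons a l ih => simp only [cont]; ring_nf; ring_nf at ih; linarith

lemma cont_concat (L : List ℤ) (x : ℤ) :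
    cont (L ++ [x]) = ((cont L).1 * x + (cont L).2.1, -(cont L).1,
      (cont L).2.2.1 * x + (cont L).2.2.2, -(cont L).2.2.1) := by
  induction L with
  | nil => simp [cont]
  | cons a l ih =>
    simp only [List.cons_append, cont, List.append_eq, ih]
    refine Prod.ext ?_ (Prod.ext ?_ (Prod.ext ?_ ?_)) <;> simp <;> ring

lemma mobius (L : List ℤ) (hL : ∀ x ∈ L, 2 ≤ x) (t : ℚ) (ht : 1 < t) :
    0 < ((cont L).2.2.1 : ℚ) * t + ((cont L).2.2.2 : ℚ) ∧
    ((cont L).2.2.1 : ℚ) * t + ((cont L).2.2.2 : ℚ) <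
      ((cont L).1 : ℚ) * t + ((cont L).2.1 : ℚ) ∧
    hjT L t = (((cont L).1 : ℚ) * t + ((cont L).2.1 : ℚ)) /
      (((cont L).2.2.1 : ℚ) * t + ((cont L).2.2.2 : ℚ)) := by
  induction L with
  | nil => simp [cont, hjT]; linarith
  | cons a l ih =>
    have ha : (2 : ℚ) ≤ (a : ℚ) := by exact_mod_cast hL a (by simp)
    obtain ⟨h1, h2, h3⟩ := ih (fun x hx => hL x (by simp [hx]))
    have h0 : (0:ℚ) < ((cont l).1 : ℚ) * t + ((cont l).2.1 : ℚ) := lt_trans h1 h2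
    have hne : ((cont l).1 : ℚ) * t + ((cont l).2.1 : ℚ) ≠ 0 := ne_of_gt h0
    have hval : hjT (a :: l) t =
        ((a : ℚ) * (((cont l).1 : ℚ) * t + ((cont l).2.1 : ℚ)) -
          (((cont l).2.2.1 : ℚ) * t + ((cont l).2.2.2 : ℚ))) /
        (((cont l).1 : ℚ) * t + ((cont l).2.1 : ℚ)) := by
      show (a : ℚ) - 1 / hjT l t = _
      rw [h3]
      field_simp
    refine ⟨h0, ?_, ?_⟩
    · simp only [cont]
      push_cast
      nlinarith [mul_le_mul_of_nonneg_right ha (le_of_lt h0)]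
    · simp only [cont]
      rw [hval]
      push_cast
      congr 1
      ring

lemma cont_bounds (L : List ℤ) (hL : ∀ x ∈ L, 2 ≤ x) :
    0 ≤ (cont L).2.2.1 ∧ (cont L).2.2.1 < (cont L).1 ∧
    0 ≤ -(cont L).2.1 ∧ -(cont L).2.1 < (cont L).1 ∧
    -(cont L).2.2.2 < (cont L).2.2.1 := by
  induction L using List.reverseRecOn with
  | nil => simp [cont]
  | append_singleton L x ih =>
    have hx : 2 ≤ x := hL x (by simp)
    have hLe : ∀ y ∈ L, 2 ≤ y := fun y hy => hL y (by simp [hy])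
    obtain ⟨i1, i2, i3, i4, i5⟩ := ih hLe
    have hm := (mobius L hLe (x : ℚ) (by exact_mod_cast by omega : (1:ℚ) < (x:ℚ))).2.1
    have hm' : (cont L).2.2.1 * x + (cont L).2.2.2 < (cont L).1 * x + (cont L).2.1 := by
      exact_mod_cast hm
    rw [cont_concat]
    refine ⟨?_, hm', ?_, ?_, ?_⟩ <;> simp only
    · nlinarith
    · omega
    · nlinarith
    · nlinarith

/-- evaluation of a nonempty list as a fraction, with positivity -/
lemma concat_main (L : List ℤ) (x : ℤ) (hL : ∀ y ∈ L, 2 ≤ y) (hx : 2 ≤ x) :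
    hjCF (L ++ [x]) = ((cont (L ++ [x])).1 : ℚ) / ((cont (L ++ [x])).2.2.1 : ℚ) ∧
    0 < (cont (L ++ [x])).2.2.1 ∧ (cont (L ++ [x])).2.2.1 < (cont (L ++ [x])).1 := by
  have h1x : (1:ℚ) < (x:ℚ) := by exact_mod_cast by omega
  obtain ⟨m1, m2, m3⟩ := mobius L hL (x : ℚ) h1x
  have hx0 : hjCF [x] = (x : ℚ) := by simp [hjCF]
  have hv : hjCF (L ++ [x]) = hjT L (x : ℚ) := by rw [hjCF_append, hx0]
  rw [cont_concat]
  refine ⟨?_, ?_, ?_⟩ <;> simp only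
  · rw [hv, m3]; push_cast; ring_nf
  · exact_mod_cast m1
  · exact_mod_cast m2

/-- identification of coprime fraction representations -/
lemma ident (X Y U V : ℤ) (hc : IsCoprime X Y) (hc' : IsCoprime U V) (hY : 0 < Y)
    (hV : 0 < V) (h : (X : ℚ) / (Y : ℚ) = (U : ℚ) / (V : ℚ)) : X = U ∧ Y = V := by
  have hY0 : (Y:ℚ) ≠ 0 := by positivity
  have hV0 : (V:ℚ) ≠ 0 := by positivity
  rw [div_eq_div_iff hY0 hV0] at h
  have hXV : X * V = U * Y := by exact_mod_cast h
  have hYV : Y ∣ V := hc.symm.dvd_of_dvd_mul_left ⟨U, by linear_combination hXV⟩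
  have hVY : V ∣ Y := hc'.symm.dvd_of_dvd_mul_left ⟨X, by linear_combination -hXV⟩
  have hYeV : Y = V := Int.dvd_antisymm (le_of_lt hY) (le_of_lt hV) hYV hVY
  subst hYeV
  exact ⟨by exact mul_right_cancel₀ (by omega) hXV, rfl⟩

end HJ

section
open HJ

/-- Indices are 0-based: the chain is `a 0, …, a (n-1)`, the removed entry is `a s`
with `1 ≤ s ≤ n - 2` (i.e. `1 < s < n` in 1-based indexing). -/
theorem stmt1 (n : ℕ) (hn : 3 ≤ n) (a : ℕ → ℤ) (ha : ∀ i < n, 2 ≤ a i)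
    (s : ℕ) (hs1 : 1 ≤ s) (hs2 : s ≤ n - 2) (has : a s = 2)
    (p q p₁ q₁ p₂ q₂ : ℕ)
    (hpq : Nat.Coprime p q) (hq : 1 ≤ q) (hqp : q < p)
    (hp₁q₁ : Nat.Coprime p₁ q₁) (hq₁ : 1 ≤ q₁) (hq₁p₁ : q₁ < p₁)
    (hp₂q₂ : Nat.Coprime p₂ q₂) (hq₂ : 1 ≤ q₂) (hq₂p₂ : q₂ < p₂)
    (hpqv : (p : ℚ) / q = hjCF ((List.range n).map fun i => a i))
    (hp1v : (p₁ : ℚ) / q₁ = hjCF ((List.range s).map fun i => a i))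
    (hp2v : (p₂ : ℚ) / q₂ = hjCF ((List.range (n - s - 1)).map fun i => a (s + 1 + i)))
    (k l : ℕ) (hk : 1 ≤ k) (hl : 1 ≤ l)
    (b c : ℕ → ℤ) (hb : ∀ i < k, 2 ≤ b i) (hc : ∀ i < l, 2 ≤ c i)
    (hbv : (p₁ : ℚ) / ((p₁ : ℚ) - q₁) = hjCF ((List.range k).map fun i => b i))
    (hcv : (p₂ : ℚ) / ((p₂ : ℚ) - q₂) = hjCF ((List.range l).map fun i => c i)) :
    (p : ℚ) / ((p : ℚ) - q) =
      hjCF ((List.range (k - 1)).map (fun i => b i) ++ [b (k - 1) + c 0] ++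
        (List.range (l - 1)).map fun i => c (i + 1)) := by
  -- notation
  set P : List ℤ := (List.range s).map (fun i => a i) with hPdef
  set S : List ℤ := (List.range (n - s - 1)).map (fun i => a (s + 1 + i)) with hSdef
  set binit : List ℤ := (List.range (k - 1)).map (fun i => b i) with hbinitdef
  set ctail : List ℤ := (List.range (l - 1)).map (fun i => c (i + 1)) with hctaildef
  have hPe : ∀ x ∈ P, 2 ≤ x := by
    intro x hx; rw [hPdef, List.mem_map] at hx
    obtain ⟨i, hi, rfl⟩ := hx; exact ha i (by simp at hi; omega)
  have hbinite : ∀ x ∈ binit, 2 ≤ x := by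
    intro x hx; rw [hbinitdef, List.mem_map] at hx
    obtain ⟨i, hi, rfl⟩ := hx; exact hb i (by simp at hi; omega)
  -- list decompositions
  have hFull : (List.range n).map (fun i => a i) = P ++ (a s :: S) := by
    rw [hPdef, hSdef]
    have h : n = (s + 1) + (n - s - 1) := by omega
    conv_lhs => rw [h, List.range_add, List.map_append, List.range_succ,
      List.map_append, List.map_map]
    simp [Function.comp]
  have hPd : P = (List.range (s-1)).map (fun i => a i) ++ [a (s-1)] := by
    rw [hPdef]
    conv_lhs => rw [show s = (s-1)+1 by omega, List.range_succ, List.map_append]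
    simp
  have hbld : (List.range k).map (fun i => b i) = binit ++ [b (k-1)] := by
    rw [hbinitdef]
    conv_lhs => rw [show k = (k-1)+1 by omega, List.range_succ, List.map_append]
    simp
  have hcl : (List.range l).map (fun i => c i) = c 0 :: ctail := by
    rw [hctaildef]
    conv_lhs => rw [show l = (l-1)+1 by omega, List.range_succ_eq_map, List.map_cons,
      List.map_map]
    simp [Function.comp, Nat.succ_eq_add_one]
  -- basic positivity
  have hp2Q : (0:ℚ) < (p₂:ℚ) := Nat.cast_pos.mpr (by omega)
  have hq2Q : (0:ℚ) < (q₂:ℚ) := Nat.cast_pos.mpr (by omega)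
  have hq2p2Q : (q₂:ℚ) < (p₂:ℚ) := by exact_mod_cast hq₂p₂
  have hp20 : (p₂:ℚ) ≠ 0 := ne_of_gt hp2Q
  have hpq20 : (p₂:ℚ) - (q₂:ℚ) ≠ 0 := by intro h0; nlinarith
  have hq0 : (q:ℚ) ≠ 0 := ne_of_gt (Nat.cast_pos.mpr (by omega))
  have hpq0 : (p:ℚ) - (q:ℚ) ≠ 0 := by
    have : (q:ℚ) < (p:ℚ) := by exact_mod_cast hqp
    intro h0; nlinarith
  have hp1Q : (0:ℚ) < (p₁:ℚ) := Nat.cast_pos.mpr (by omega)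
  have hp10 : (p₁:ℚ) ≠ 0 := ne_of_gt hp1Q
  -- value of the full fraction
  have hτ : (1:ℚ) < 2 - (q₂:ℚ)/(p₂:ℚ) := by
    have h01 : (q₂:ℚ)/(p₂:ℚ) < 1 := (div_lt_one hp2Q).mpr hq2p2Q
    linarith
  have hS2 : hjCF (a s :: S) = 2 - (q₂:ℚ)/(p₂:ℚ) := by
    show (a s : ℚ) - 1 / hjCF S = _
    rw [← hp2v, has, one_div_div]
    norm_num
  have hvF : (p:ℚ)/q = hjT P (2 - (q₂:ℚ)/(p₂:ℚ)) := by
    rw [hpqv, hFull, hjCF_append, hS2]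
  obtain ⟨hd1pos, hd1lt, hval1⟩ := mobius P hPe (2 - (q₂:ℚ)/(p₂:ℚ)) hτ
  -- identify cont P = (p₁, B₁, q₁, D₁)
  have hcopP : IsCoprime ((cont P).1) ((cont P).2.2.1) :=
    ⟨(cont P).2.2.2, -(cont P).2.1, by linear_combination cont_det P⟩
  have hcop1 : IsCoprime ((p₁:ℤ)) ((q₁:ℤ)) := by
    rw [Int.isCoprime_iff_gcd_eq_one, Int.gcd_natCast_natCast]
    exact hp₁q₁
  obtain ⟨hPval, hPCpos, hPCA⟩ := by
    have h := concat_main ((List.range (s-1)).map (fun i => a i)) (a (s-1))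
      (fun y hy => by
        rw [List.mem_map] at hy; obtain ⟨i, hi, rfl⟩ := hy
        exact ha i (by simp at hi; omega))
      (ha (s-1) (by omega))
    rw [← hPd] at h
    exact h
  obtain ⟨hA1, hC1⟩ := ident (cont P).1 (cont P).2.2.1 (p₁:ℤ) (q₁:ℤ) hcopP hcop1
    hPCpos (by omega) (by
      rw [← hPval, ← hp1v]; push_cast; ring)
  -- identify cont (blist) = (p₁, -E, p₁ - q₁, -G)
  set E : ℤ := (cont binit).1 with hEdef
  set F : ℤ := (cont binit).2.1 with hFdef
  set G : ℤ := (cont binit).2.2.1 with hGdef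
  set H : ℤ := (cont binit).2.2.2 with hHdef
  have hble : ∀ x ∈ binit ++ [b (k-1)], 2 ≤ x := by
    intro x hx
    rw [← hbld, List.mem_map] at hx
    obtain ⟨i, hi, rfl⟩ := hx; exact hb i (by simpa using hi)
  have hcontbl : cont (binit ++ [b (k-1)]) = (E * b (k-1) + F, -E, G * b (k-1) + H, -G) := by
    rw [cont_concat]
  have hcopbl : IsCoprime (E * b (k-1) + F) (G * b (k-1) + H) :=
    ⟨-G, E, by
      have := cont_det (binit ++ [b (k-1)])
      rw [hcontbl] at this
      linear_combination this⟩
  have hcop1' : IsCoprime ((p₁:ℤ)) ((p₁:ℤ) - (q₁:ℤ)) := by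
    obtain ⟨u, v, huv⟩ := hcop1
    exact ⟨u + v, -v, by linear_combination huv⟩
  obtain ⟨hblval, hblCpos, hblCA⟩ := by
    have h := concat_main binit (b (k-1)) hbinite (hb (k-1) (by omega))
    exact h
  rw [hcontbl] at hblval hblCpos hblCA
  obtain ⟨hE1, hG1⟩ := ident (E * b (k-1) + F) (G * b (k-1) + H) (p₁:ℤ) ((p₁:ℤ) - (q₁:ℤ))
    hcopbl hcop1' hblCpos (by omega) (by
      rw [← hblval, ← hbld, ← hbv]; push_cast; ring)
  -- determinants and bounds
  have hdetP : (p₁:ℤ) * (cont P).2.2.2 - (cont P).2.1 * (q₁:ℤ) = 1 := by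
    have := cont_det P; rw [hA1, hC1] at this; exact this
  have hdetB : E * ((p₁:ℤ) - q₁) - G * (p₁:ℤ) = 1 := by
    have := cont_det (binit ++ [b (k-1)])
    rw [hcontbl] at this
    linear_combination this + G * hE1 - E * hG1
  have hbB0 : 0 ≤ -(cont P).2.1 := (cont_bounds P hPe).2.2.1
  have hbBA : -(cont P).2.1 < (p₁:ℤ) := by
    have h := (cont_bounds P hPe).2.2.2.1
    rwa [hA1] at h
  have hE_pos : 1 ≤ E := by
    have h1 := (cont_bounds binit hbinite).1
    have h2 := (cont_bounds binit hbinite).2.1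
    rw [← hGdef] at h1
    rw [← hGdef, ← hEdef] at h2
    omega
  have hE_lt : E < (p₁:ℤ) := by
    have h4 := (cont_bounds (binit ++ [b (k-1)]) hble).2.2.2.1
    rw [hcontbl] at h4
    simp only [neg_neg] at h4
    rw [hE1] at h4
    exact h4
  -- E = p₁ + B₁
  have hEeq : E = (p₁:ℤ) + (cont P).2.1 := by
    have hdvd : (p₁:ℤ) ∣ (E - ((p₁:ℤ) + (cont P).2.1)) := by
      have h2 : (q₁:ℤ) * (E - ((p₁:ℤ) + (cont P).2.1)) =
          (p₁:ℤ) * (E - G - (q₁:ℤ) - (cont P).2.2.2) := by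
        linear_combination hdetP - hdetB
      have h3 : (p₁:ℤ) ∣ (q₁:ℤ) * (E - ((p₁:ℤ) + (cont P).2.1)) := ⟨_, h2⟩
      exact hcop1.dvd_of_dvd_mul_left h3
    have habs : |E - ((p₁:ℤ) + (cont P).2.1)| < (p₁:ℤ) := by
      rw [abs_lt]
      omega
    linarith [Int.eq_zero_of_abs_lt_dvd hdvd habs]
  -- rewrite the goal list and evaluate
  have hgl : binit ++ [b (k-1) + c 0] ++ ctail = binit ++ ((b (k-1) + c 0) :: ctail) := by
    simp
  rw [hgl, hjCF_append]
  have hct : hjCF ((b (k-1) + c 0) :: ctail) = (b (k-1) : ℚ) + (p₂:ℚ)/((p₂:ℚ)-(q₂:ℚ)) := by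
    show ((b (k-1) + c 0 : ℤ) : ℚ) - 1 / hjCF ctail = _
    have h2 : (c 0 : ℚ) - 1/hjCF ctail = (p₂:ℚ)/((p₂:ℚ)-(q₂:ℚ)) := by
      have h3 : hjCF ((List.range l).map (fun i => c i)) = (c 0 : ℚ) - 1 / hjCF ctail := by
        rw [hcl]; rfl
      rw [← h3, ← hcv]
    push_cast
    linarith [h2]
  have hu_pos : (0:ℚ) < (p₂:ℚ)/((p₂:ℚ)-(q₂:ℚ)) := by
    exact div_pos hp2Q (by linarith)
  have hbu : (1:ℚ) < (b (k-1):ℚ) + (p₂:ℚ)/((p₂:ℚ)-(q₂:ℚ)) := by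
    have h5 : (2:ℚ) ≤ (b (k-1):ℚ) := by exact_mod_cast hb (k-1) (by omega)
    linarith
  obtain ⟨hd2pos, hd2lt, hval2⟩ := mobius binit hbinite _ hbu
  rw [hct, hval2]
  rw [← hEdef, ← hFdef, ← hGdef, ← hHdef]
  rw [div_eq_div_iff hpq0 (ne_of_gt hd2pos)]
  -- clear denominators in the main value equation
  rw [hA1, hC1] at hval1
  rw [hC1] at hd1pos
  have h := hvF
  rw [hval1, div_eq_div_iff hq0 (ne_of_gt hd1pos)] at h
  have e1 : (((q₁:ℤ):ℚ)*(2 - (q₂:ℚ)/p₂) + ((cont P).2.2.2:ℚ)) * p₂ =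
      (q₁:ℚ)*(2*p₂-q₂) + ((cont P).2.2.2:ℚ)*p₂ := by field_simp; push_cast; ring
  have e2 : (((p₁:ℤ):ℚ)*(2 - (q₂:ℚ)/p₂) + ((cont P).2.1:ℚ)) * p₂ =
      (p₁:ℚ)*(2*p₂-q₂) + ((cont P).2.1:ℚ)*p₂ := by field_simp; push_cast; ring
  have h1 : (p:ℚ) * ((q₁:ℚ)*(2*p₂-q₂) + ((cont P).2.2.2:ℚ)*p₂) =
      (q:ℚ) * ((p₁:ℚ)*(2*p₂-q₂) + ((cont P).2.1:ℚ)*p₂) := by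
    rw [← e1, ← e2]
    linear_combination (p₂:ℚ) * h
  have hDnpos : (0:ℚ) < (q₁:ℚ)*(2*p₂-q₂) + ((cont P).2.2.2:ℚ)*p₂ := by
    rw [← e1]
    have := mul_pos hd1pos hp2Q
    push_cast at this ⊢
    convert this using 2
  -- cast the integer identities to ℚ
  have e2q : (p₁:ℚ) * ((cont P).2.2.2:ℚ) - ((cont P).2.1:ℚ) * q₁ = 1 := by exact_mod_cast hdetP
  have e4q : (E:ℚ)*((p₁:ℚ)-q₁) - (G:ℚ)*p₁ = 1 := by exact_mod_cast hdetB
  have e5q : (E:ℚ) = (p₁:ℚ) + ((cont P).2.1:ℚ) := by exact_mod_cast hEeq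
  have e3aq : (E:ℚ)*(b (k-1):ℚ) + (F:ℚ) = (p₁:ℚ) := by exact_mod_cast hE1
  have e3bq : (G:ℚ)*(b (k-1):ℚ) + (H:ℚ) = (p₁:ℚ) - q₁ := by exact_mod_cast hG1
  have hu2 : (p₂:ℚ)/((p₂:ℚ)-q₂) * ((p₂:ℚ)-q₂) = p₂ := div_mul_cancel₀ _ hpq20
  -- the key polynomial identity
  have key : (p:ℚ) * (((p₁:ℚ)-q₁)*((p₂:ℚ)-q₂) + (G:ℚ)*p₂) =
      ((p:ℚ) - q) * ((p₁:ℚ)*((p₂:ℚ)-q₂) + (E:ℚ)*p₂) := by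
    apply mul_left_cancel₀ (mul_ne_zero hp10 (ne_of_gt hDnpos))
    linear_combination
      ((p₁:ℚ)*((((p₁:ℚ)-q₁)*((p₂:ℚ)-q₂) + (G:ℚ)*p₂) -
        ((p₁:ℚ)*((p₂:ℚ)-q₂) + (E:ℚ)*p₂))) * h1
      + ((q:ℚ)*p₂*((p₁:ℚ)*((p₂:ℚ)-q₂) + (E:ℚ)*p₂)) * e2q
      - ((q:ℚ)*p₂*((p₁:ℚ)*(2*p₂-q₂) + ((cont P).2.1:ℚ)*p₂)) * e4q
      + ((q:ℚ)*p₂*p₂) * e5q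
  apply mul_right_cancel₀ hpq20
  linear_combination key + ((p:ℚ)*((p₂:ℚ)-q₂))*e3bq - (((p:ℚ)-q)*((p₂:ℚ)-q₂))*e3aq
    + ((p:ℚ)*(G:ℚ) - ((p:ℚ)-q)*(E:ℚ))*hu2

end
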